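/- Let X be a Delone set in ℝ^d whose generated additive subgroup [X] is finitely generated, and let Q : ℝ^d → ℝ^d be a linear map with Q(X) ⊆ X. Then every complex eigenvalue of Q (i.e. every complex root of the characteristic polynomial of Q) is an algebraic integer. -/

import Mathlib

open scoped Pointwise

noncomputable section


open scoped Pointwise

noncomputable section

/-- `X` is uniformly discrete with parameter `r`: distinct points are at distance `≥ 2r`. -/
def UnifDiscrete {d : ℕ} (X : Set (EuclideanSpace ℝ (Fin d))) (r : ℝ) : Prop :=
  ∀ x ∈ X, ∀ y ∈ X, x ≠ y → 2 * r ≤ dist x y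

/-- `X` is relatively dense with parameter `R`: every closed ball of radius `R` meets `X`. -/
def RelDense {d : ℕ} (X : Set (EuclideanSpace ℝ (Fin d))) (R : ℝ) : Prop :=
  ∀ z : EuclideanSpace ℝ (Fin d), ∃ x ∈ X, dist z x ≤ R

/-- `X` is a Delone set. -/
def IsDelone {d : ℕ} (X : Set (EuclideanSpace ℝ (Fin d))) : Prop :=
  (∃ r > 0, UnifDiscrete X r) ∧ (∃ R > 0, RelDense X R)

open Polynomial Matrix in
lemma aux_eval_charpoly {n : Type*} [Fintype n] [DecidableEq n] {R : Type*} [CommRing R]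
    (M : Matrix n n R) (z : R) : M.charpoly.eval z = (z • (1 : Matrix n n R) - M).det := by
  rw [Matrix.charpoly, ← Polynomial.coe_evalRingHom, RingHom.map_det]
  congr 1
  ext i j
  by_cases h : i = j <;>
    simp [charmatrix_apply, Matrix.one_apply, h, Matrix.smul_apply, Matrix.map_apply,
      Matrix.diagonal_apply]

open Matrix in
lemma aux_vecMul_smul_one {n : Type*} [Fintype n] [DecidableEq n] {R : Type*} [CommRing R]
    (v : n → R) (z : R) : v ᵥ* (z • (1 : Matrix n n R)) = z • v := by
  ext j
  simp [Matrix.vecMul, dotProduct, Matrix.one_apply, mul_comm]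

open Matrix in
lemma aux_exists_left_eig {n : Type*} [Fintype n] [DecidableEq n] {K : Type*} [Field K]
    (M : Matrix n n K) {z : K} (h : M.charpoly.eval z = 0) :
    ∃ v, v ≠ 0 ∧ v ᵥ* M = z • v := by
  rw [aux_eval_charpoly] at h
  obtain ⟨v, hv, hvm⟩ := Matrix.exists_vecMul_eq_zero_iff.2 h
  refine ⟨v, hv, ?_⟩
  rw [Matrix.vecMul_sub, aux_vecMul_smul_one, sub_eq_zero] at hvm
  exact hvm.symm

lemma aux_sum_apply {d : ℕ} {ι : Type*} (s : Finset ι) (f : ι → EuclideanSpace ℝ (Fin d))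
    (k : Fin d) : (∑ i ∈ s, f i) k = ∑ i ∈ s, f i k := by
  classical
  induction s using Finset.cons_induction with
  | empty => rfl
  | cons a s ha ih => rw [Finset.sum_cons, Finset.sum_cons, ← ih]; rfl

open Matrix Polynomial in
/-- If `X` is a Delone set whose generated subgroup is finitely generated and `Q` is a linear
map with `Q(X) ⊆ X`, then every complex eigenvalue of `Q` (root of its characteristic
polynomial) is an algebraic integer. -/
theorem eigenvalues_algebraic_integers {d : ℕ} (X : Set (EuclideanSpace ℝ (Fin d)))
    (hX : IsDelone X) (hfg : (AddSubgroup.closure X).FG)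
    (Q : EuclideanSpace ℝ (Fin d) →ₗ[ℝ] EuclideanSpace ℝ (Fin d))
    (hQX : ∀ x ∈ X, Q x ∈ X) :
    ∀ z : ℂ, (Q.charpoly.map (algebraMap ℝ ℂ)).IsRoot z → IsIntegral ℤ z := by
  classical
  intro z hz
  obtain ⟨-, R, hR, hdens⟩ := hX
  -- Step A: `X` spans `ℝ^d` over `ℝ`.
  have hspanX : Submodule.span ℝ X = ⊤ := by
    by_contra h
    have hbot : (Submodule.span ℝ X)ᗮ ≠ ⊥ := fun hb =>
      h (Submodule.orthogonal_eq_bot_iff.mp hb)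
    obtain ⟨v, hvmem, hvne⟩ := (Submodule.ne_bot_iff _).mp hbot
    have hvnorm : (0 : ℝ) < ‖v‖ := norm_pos_iff.mpr hvne
    set z0 : EuclideanSpace ℝ (Fin d) := ((R + 1) / ‖v‖) • v with hz0
    obtain ⟨x, hxX, hdist⟩ := hdens z0
    have hxv : (inner ℝ x v : ℝ) = 0 :=
      (Submodule.mem_orthogonal _ _).1 hvmem x (Submodule.subset_span hxX)
    have hz0v : (inner ℝ z0 v : ℝ) = (R + 1) * ‖v‖ := by
      rw [hz0, real_inner_smul_left, real_inner_self_eq_norm_sq]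
      field_simp
    have h1 : (inner ℝ (z0 - x) v : ℝ) = (R + 1) * ‖v‖ := by
      rw [inner_sub_left, hxv, hz0v, sub_zero]
    have h2 : |(inner ℝ (z0 - x) v : ℝ)| ≤ ‖z0 - x‖ * ‖v‖ := abs_real_inner_le_norm _ _
    rw [h1] at h2
    have h3 : (R + 1) * ‖v‖ ≤ ‖z0 - x‖ * ‖v‖ := le_trans (le_abs_self _) h2
    have h4 : ‖z0 - x‖ ≤ R := by rw [← dist_eq_norm]; exact hdist
    nlinarith
  -- Step B : finitely many generators
  obtain ⟨S, hS⟩ := hfg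
  have hNspan : Submodule.span ℤ (↑S : Set (EuclideanSpace ℝ (Fin d))) = Submodule.span ℤ X := by
    ext y
    rw [← Submodule.mem_toAddSubgroup, ← Submodule.mem_toAddSubgroup,
      Submodule.span_int_eq_addSubgroupClosure, Submodule.span_int_eq_addSubgroupClosure, hS]
  have hQN : ∀ y ∈ Submodule.span ℤ (↑S : Set (EuclideanSpace ℝ (Fin d))), Q y ∈ Submodule.span ℤ (↑S : Set (EuclideanSpace ℝ (Fin d))) := by
    intro y hy
    rw [hNspan] at hy ⊢
    have hmap : Submodule.map (Q.restrictScalars ℤ) (Submodule.span ℤ X) ≤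
        Submodule.span ℤ X := by
      rw [Submodule.map_span]
      refine Submodule.span_le.2 ?_
      rintro u ⟨x, hx, rfl⟩
      exact Submodule.subset_span (hQX x hx)
    exact hmap ⟨y, hy, rfl⟩
  choose c _ hc using fun j : ↥S =>
    Submodule.mem_span_finset.1 (hQN j (Submodule.subset_span (Finset.mem_coe.mpr j.2)))
  -- matrices
  set b : Module.Basis (Fin d) ℝ (EuclideanSpace ℝ (Fin d)) := PiLp.basisFun 2 ℝ (Fin d) with hb
  set A : Matrix (Fin d) (Fin d) ℝ := LinearMap.toMatrix b b Q with hA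
  set P : Matrix (Fin d) ↥S ℝ := fun k j => (j : EuclideanSpace ℝ (Fin d)) k with hP
  set Mz : Matrix ↥S ↥S ℤ := fun i j => c j (i : EuclideanSpace ℝ (Fin d)) with hMz
  have hAmul : ∀ x : EuclideanSpace ℝ (Fin d), A *ᵥ (fun l => x l) = fun k => Q x k := by
    intro x
    have h1 := LinearMap.toMatrix_mulVec_repr b b Q x
    have h2 : (⇑(b.repr x) : Fin d → ℝ) = fun l => x l := by
      funext l; exact PiLp.basisFun_repr 2 ℝ (Fin d) x l
    have h3 : (⇑(b.repr (Q x)) : Fin d → ℝ) = fun k => Q x k := by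
      funext k; exact PiLp.basisFun_repr 2 ℝ (Fin d) (Q x) k
    rw [← h3, ← h1, h2]
  have hsum : ∀ j : ↥S, Q (j : EuclideanSpace ℝ (Fin d)) = ∑ i : ↥S, c j (i : EuclideanSpace ℝ (Fin d)) • (i : EuclideanSpace ℝ (Fin d)) := by
    intro j
    rw [← hc j]
    exact (Finset.sum_coe_sort S fun i => c j i • i).symm
  have key : A * P = P * Mz.map (Int.cast : ℤ → ℝ) := by
    ext k j
    have lhs : (A * P) k j = Q (j : EuclideanSpace ℝ (Fin d)) k := by
      have := congrFun (hAmul (j : EuclideanSpace ℝ (Fin d))) k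
      rw [Matrix.mul_apply]
      simpa [Matrix.mulVec, dotProduct, hP] using this
    rw [lhs, Matrix.mul_apply, hsum j]
    rw [aux_sum_apply]
    refine Finset.sum_congr rfl fun i _ => ?_
    have : (c j (i : EuclideanSpace ℝ (Fin d)) • (i : EuclideanSpace ℝ (Fin d))) k = (c j (i : EuclideanSpace ℝ (Fin d)) : ℝ) * (i : EuclideanSpace ℝ (Fin d)) k := by
      rw [← Int.cast_smul_eq_zsmul ℝ, PiLp.smul_apply, smul_eq_mul]
    rw [this, hP, hMz]
    show _ = _ * ((c j (i : EuclideanSpace ℝ (Fin d)) : ℤ) : ℝ)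
    ring
  -- surjectivity of P
  have hspanS : Submodule.span ℝ (↑S : Set (EuclideanSpace ℝ (Fin d))) = ⊤ := by
    rw [eq_top_iff, ← hspanX]
    refine Submodule.span_le.2 fun x hx => ?_
    have h1 : x ∈ Submodule.span ℤ (↑S : Set (EuclideanSpace ℝ (Fin d))) := by
      rw [hNspan]; exact Submodule.subset_span hx
    exact Submodule.span_subset_span ℤ ℝ _ h1
  have hsurj : ∀ u : Fin d → ℝ, ∃ t : ↥S → ℝ, P *ᵥ t = u := by
    intro u
    have hu : (WithLp.toLp 2 u : EuclideanSpace ℝ (Fin d)) ∈ Submodule.span ℝ (↑S : Set (EuclideanSpace ℝ (Fin d))) := by rw [hspanS]; trivial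
    obtain ⟨g, -, hg⟩ := Submodule.mem_span_finset.1 hu
    refine ⟨fun j => g (j : EuclideanSpace ℝ (Fin d)), ?_⟩
    funext k
    have h5 : (∑ i ∈ S, g i • i) k = u k :=
      congrArg (fun w : EuclideanSpace ℝ (Fin d) => w k) hg
    rw [aux_sum_apply] at h5
    have h6 : ∑ i ∈ S, (g i • i) k = ∑ i ∈ S, g i * i k :=
      Finset.sum_congr rfl fun i _ => by rw [PiLp.smul_apply, smul_eq_mul]
    have h7 : (P *ᵥ fun j => g (j : EuclideanSpace ℝ (Fin d))) k = ∑ i ∈ S, g i * i k := by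
      rw [show (P *ᵥ fun j => g (j : EuclideanSpace ℝ (Fin d))) k
          = ∑ j : ↥S, g (j : EuclideanSpace ℝ (Fin d)) * (j : EuclideanSpace ℝ (Fin d)) k by
        simp [Matrix.mulVec, dotProduct, hP, mul_comm]]
      exact Finset.sum_coe_sort S (fun i => g i * i k)
    rw [h7, ← h6, h5]
  have hinj : ∀ u : Fin d → ℝ, u ᵥ* P = 0 → u = 0 := by
    intro u hu
    obtain ⟨t, ht⟩ := hsurj u
    have : u ⬝ᵥ u = 0 := by
      nth_rewrite 2 [← ht]
      rw [dotProduct_mulVec, hu, zero_dotProduct]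
    exact dotProduct_self_eq_zero.mp this
  -- pass to ℂ
  set f := algebraMap ℝ ℂ with hf
  have hcharQ : Q.charpoly = A.charpoly := (LinearMap.charpoly_toMatrix Q b).symm
  have hz' : (A.map f).charpoly.eval z = 0 := by
    rw [Matrix.charpoly_map]
    rw [hcharQ] at hz
    exact hz
  obtain ⟨v, hv0, hveq⟩ := aux_exists_left_eig (A.map f) hz'
  set Pc := P.map f with hPc
  set Bc := Mz.map (Int.cast : ℤ → ℂ) with hBc
  have hBc' : (Mz.map (Int.cast : ℤ → ℝ)).map f = Bc := by
    ext i j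
    simp [hBc, Matrix.map_apply, hf, map_intCast]
  have keyC : A.map f * Pc = Pc * Bc := by
    calc A.map f * Pc = (A * P).map f := (Matrix.map_mul).symm
      _ = (P * Mz.map (Int.cast : ℤ → ℝ)).map f := by rw [key]
      _ = Pc * Bc := by rw [Matrix.map_mul, hBc']
  set w := v ᵥ* Pc with hw
  have hwB : w ᵥ* Bc = z • w := by
    rw [hw, Matrix.vecMul_vecMul, ← keyC, ← Matrix.vecMul_vecMul, hveq, Matrix.smul_vecMul]
  have hw0 : w ≠ 0 := by
    intro h0
    apply hv0
    have hpart : ∀ g : ℂ →+ ℝ, (∀ (a : ℂ) (r : ℝ), g (a * (r : ℂ)) = g a * r) →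
        (fun k => g (v k)) ᵥ* P = 0 := by
      intro g hg
      funext j
      have h6 : ∑ k, v k * ((P k j : ℝ) : ℂ) = 0 := by
        have h6' := congrFun h0 j
        rw [hw] at h6'
        simpa [Matrix.vecMul, dotProduct, hPc, Matrix.map_apply, hf] using h6'
      have h7 : ∑ k, g (v k) * P k j = 0 := by
        have h8 := congrArg g h6
        rw [map_sum, map_zero] at h8
        rw [← h8]
        exact Finset.sum_congr rfl fun k _ => (hg _ _).symm
      simpa [Matrix.vecMul, dotProduct] using h7
    have hre := hinj _ (hpart (Complex.reAddGroupHom) (by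
      intro a r
      simp [Complex.mul_re]))
    have him := hinj _ (hpart (Complex.imAddGroupHom) (by
      intro a r
      simp [Complex.mul_im]))
    funext k
    have h8 : (v k).re = 0 := congrFun hre k
    have h9 : (v k).im = 0 := congrFun him k
    exact Complex.ext h8 h9
  have hdet : (z • (1 : Matrix ↥S ↥S ℂ) - Bc).det = 0 := by
    rw [← Matrix.exists_vecMul_eq_zero_iff]
    exact ⟨w, hw0, by rw [Matrix.vecMul_sub, aux_vecMul_smul_one, hwB, sub_self]⟩
  refine ⟨Mz.charpoly, Mz.charpoly_monic, ?_⟩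
  have heval : Polynomial.eval₂ (algebraMap ℤ ℂ) z Mz.charpoly = Bc.charpoly.eval z := by
    have h10 : Bc = Mz.map ⇑(Int.castRingHom ℂ) := rfl
    rw [h10, Matrix.charpoly_map, Polynomial.eval_map, algebraMap_int_eq]
  rw [heval, aux_eval_charpoly, hdet]
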